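/- Let E be a finite set and ind an irreflexive symmetric relation on E, and consider the comtrace alphabet (E, sim, ser) with sim = ser = ind. Then for all words x, y ∈ E*: x ≡_ind y (trace congruence) if and only if x^{} ≡_ser y^{} (comtrace congruence of the associated singleton step sequences). -/

import Mathlib

variable {E : Type*}

/-- A step over a comtrace alphabet `(E, sim, ser)`: a nonempty finite set of events,
pairwise related by `sim`. -/
def IsStep [DecidableEq E] (sim : E → E → Prop) (A : Finset E) : Prop :=
  A.Nonempty ∧ ∀ a ∈ A, ∀ b ∈ A, a ≠ b → sim a b

/-- A step sequence: a finite list of steps. -/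
def IsStepSeq [DecidableEq E] (sim : E → E → Prop) (u : List (Finset E)) : Prop :=
  ∀ A ∈ u, IsStep sim A

/-- The generating relation of comtrace congruence:
`w·A·z ≈ w·B·C·z` whenever `A`, `B`, `C` are steps with `B ∪ C = A` and `B × C ⊆ ser`. -/
def CTBase [DecidableEq E] (sim ser : E → E → Prop) (u v : List (Finset E)) : Prop :=
  ∃ (w z : List (Finset E)) (A B C : Finset E),
    IsStepSeq sim w ∧ IsStepSeq sim z ∧
    IsStep sim A ∧ IsStep sim B ∧ IsStep sim C ∧
    B ∪ C = A ∧ (∀ b ∈ B, ∀ c ∈ C, ser b c) ∧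
    u = w ++ A :: z ∧ v = w ++ B :: C :: z

/-- The least equivalence relation containing `base`. -/
def LeastEquiv {α : Type*} (base : α → α → Prop) (x y : α) : Prop :=
  ∀ c : α → α → Prop, Equivalence c → (∀ a b, base a b → c a b) → c x y

/-- Comtrace congruence: the least equivalence relation containing `CTBase`. -/
def CTEquiv [DecidableEq E] (sim ser : E → E → Prop) :
    List (Finset E) → List (Finset E) → Prop :=
  LeastEquiv (CTBase sim ser)

/-- The generating relation of Mazurkiewicz trace congruence:
`w·a·b·z ≈ w·b·a·z` whenever `(a, b) ∈ ind`. -/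
def TraceBase (ind : E → E → Prop) (x y : List E) : Prop :=
  ∃ (w z : List E) (a b : E), ind a b ∧ x = w ++ a :: b :: z ∧ y = w ++ b :: a :: z

/-- Trace congruence: the least equivalence relation containing `TraceBase`. -/
def TraceEquiv (ind : E → E → Prop) : List E → List E → Prop :=
  LeastEquiv (TraceBase ind)

theorem leastEquiv_equivalence {α : Type*} (base : α → α → Prop) :
    Equivalence (LeastEquiv base) := by
  constructor
  · intro x c hc _; exact hc.refl x
  · intro x y h c hc hb; exact hc.symm (h c hc hb)
  · intro x y z h1 h2 c hc hb; exact hc.trans (h1 c hc hb) (h2 c hc hb)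

theorem leastEquiv_of_base {α : Type*} {base : α → α → Prop} {x y : α} (h : base x y) :
    LeastEquiv base x y := fun _ _ hb => hb x y h

theorem bind_map_singleton [DecidableEq E] (l : List E) :
    (l.map fun a => ({a} : Finset E)).flatMap Finset.toList = l := by
  induction l with
  | nil => simp
  | cons a l ih => simp [ih]

theorem traceEquiv_append (ind : E → E → Prop) (w z : List E) {p q : List E}
    (h : TraceEquiv ind p q) : TraceEquiv ind (w ++ p ++ z) (w ++ q ++ z) := by
  refine h (fun p q => TraceEquiv ind (w ++ p ++ z) (w ++ q ++ z)) ?_ ?_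
  · constructor
    · intro a; exact (leastEquiv_equivalence _).refl _
    · intro a b hab; exact (leastEquiv_equivalence _).symm hab
    · intro a b c hab hbc; exact (leastEquiv_equivalence _).trans hab hbc
  · rintro p q ⟨w', z', a, b, hab, rfl, rfl⟩
    apply leastEquiv_of_base
    exact ⟨w ++ w', z' ++ z, a, b, hab, by simp, by simp⟩

theorem traceEquiv_of_perm {ind : E → E → Prop} (hsymm : ∀ a b, ind a b → ind b a)
    {l₁ l₂ : List E} (hp : l₁.Perm l₂) (hpw : l₁.Pairwise ind) :
    TraceEquiv ind l₁ l₂ := by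
  induction hp with
  | nil => exact (leastEquiv_equivalence _).refl _
  | cons a p ih =>
      have := traceEquiv_append ind [a] [] (ih (List.Pairwise.of_cons hpw))
      simpa using this
  | swap a b l =>
      apply leastEquiv_of_base
      exact ⟨[], l, b, a, (List.pairwise_cons.1 hpw).1 a (by simp), rfl, rfl⟩
  | trans p₁ p₂ ih₁ ih₂ =>
      refine (leastEquiv_equivalence _).trans (ih₁ hpw) (ih₂ ?_)
      exact (p₁.pairwise_iff (fun {a b} hab => hsymm a b hab)).1 hpw

/-- For the comtrace alphabet with `sim = ser = ind`, two words are trace congruent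
iff their associated singleton step sequences are comtrace congruent. -/
theorem stmt3 [DecidableEq E] [Fintype E] (ind : E → E → Prop)
    (hirr : ∀ a, ¬ ind a a) (hsymm : ∀ a b, ind a b → ind b a)
    (x y : List E) :
    TraceEquiv ind x y ↔
      CTEquiv ind ind (x.map fun a => ({a} : Finset E))
        (y.map fun a => ({a} : Finset E)) := by
  have hsings : ∀ l : List E, IsStepSeq ind (l.map fun a => ({a} : Finset E)) := by
    intro l A hA
    simp only [List.mem_map] at hA
    obtain ⟨a, -, rfl⟩ := hA
    refine ⟨⟨a, by simp⟩, ?_⟩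
    intro u hu v hv huv
    simp only [Finset.mem_singleton] at hu hv
    subst hu; subst hv
    exact absurd rfl huv
  have hsingStep : ∀ a : E, IsStep ind ({a} : Finset E) := by
    intro a
    refine ⟨⟨a, by simp⟩, ?_⟩
    intro u hu v hv huv
    simp only [Finset.mem_singleton] at hu hv
    subst hu; subst hv
    exact absurd rfl huv
  constructor
  · intro h
    refine h (fun x y => CTEquiv ind ind (x.map fun a => ({a} : Finset E))
        (y.map fun a => ({a} : Finset E))) ?_ ?_
    · constructor
      · intro a; exact (leastEquiv_equivalence _).refl _
      · intro a b hab; exact (leastEquiv_equivalence _).symm hab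
      · intro a b c hab hbc; exact (leastEquiv_equivalence _).trans hab hbc
    · rintro x y ⟨w, z, a, b, hab, rfl, rfl⟩
      have hne : a ≠ b := fun h => hirr a (h ▸ hab)
      have hstepab : IsStep ind ({a, b} : Finset E) := by
        refine ⟨⟨a, by simp⟩, ?_⟩
        intro u hu v hv huv
        simp only [Finset.mem_insert, Finset.mem_singleton] at hu hv
        rcases hu with rfl | rfl <;> rcases hv with rfl | rfl
        · exact absurd rfl huv
        · exact hab
        · exact hsymm _ _ hab
        · exact absurd rfl huv
      have h1 : CTBase ind ind
          ((w.map fun a => ({a} : Finset E)) ++ ({a, b} : Finset E) ::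
            (z.map fun a => ({a} : Finset E)))
          ((w ++ a :: b :: z).map fun a => ({a} : Finset E)) := by
        refine ⟨_, _, {a, b}, {a}, {b}, hsings w, hsings z, hstepab, hsingStep a,
          hsingStep b, (Finset.insert_eq a {b}).symm, ?_, rfl, by simp⟩
        intro u hu v hv
        simp only [Finset.mem_singleton] at hu hv
        subst hu; subst hv; exact hab
      have h2 : CTBase ind ind
          ((w.map fun a => ({a} : Finset E)) ++ ({a, b} : Finset E) ::
            (z.map fun a => ({a} : Finset E)))
          ((w ++ b :: a :: z).map fun a => ({a} : Finset E)) := by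
        refine ⟨_, _, {a, b}, {b}, {a}, hsings w, hsings z, hstepab, hsingStep b,
          hsingStep a, ?_, ?_, rfl, by simp⟩
        · rw [← Finset.insert_eq, Finset.pair_comm]
        · intro u hu v hv
          simp only [Finset.mem_singleton] at hu hv
          subst hu; subst hv; exact hsymm _ _ hab
      exact (leastEquiv_equivalence _).trans
        ((leastEquiv_equivalence _).symm (leastEquiv_of_base h1)) (leastEquiv_of_base h2)
  · intro h
    have key := h (fun u v => TraceEquiv ind (u.flatMap Finset.toList) (v.flatMap Finset.toList))
      ?_ ?_
    · rwa [bind_map_singleton, bind_map_singleton] at key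
    · constructor
      · intro a; exact (leastEquiv_equivalence _).refl _
      · intro a b hab; exact (leastEquiv_equivalence _).symm hab
      · intro a b c hab hbc; exact (leastEquiv_equivalence _).trans hab hbc
    · rintro u v ⟨w, z, A, B, C, hw, hz, hA, hB, hC, hBC, hser, rfl, rfl⟩
      have hdisj : Disjoint B C := by
        rw [Finset.disjoint_left]
        intro a haB haC
        exact hirr a (hser a haB a haC)
      have hperm : A.toList.Perm (B.toList ++ C.toList) := by
        rw [← Multiset.coe_eq_coe]
        have h2 : ((B.toList ++ C.toList : List E) : Multiset E) = B.val + C.val := by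
          rw [← Multiset.coe_add, Finset.coe_toList, Finset.coe_toList]
        rw [Finset.coe_toList, h2, ← hBC, ← Finset.disjUnion_eq_union B C hdisj]
        rfl
      have hpw : A.toList.Pairwise ind := by
        refine A.nodup_toList.imp_of_mem ?_
        intro a b ha hb hne
        exact hA.2 a (Finset.mem_toList.1 ha) b (Finset.mem_toList.1 hb) hne
      have hcore := traceEquiv_of_perm hsymm hperm hpw
      have := traceEquiv_append ind (w.flatMap Finset.toList) (z.flatMap Finset.toList) hcore
      simpa using this
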